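/- Let D = (V, A) be a digraph without self-loops in which every vertex has in-degree at most 2 and out-degree at most 2, and let D' be the subdivision of D, with vertex set V ⊔ A. Then there exist maps s, g : V ⊔ A → ℝ² such that: the closed unit discs centered at the points s(x), x ∈ V ⊔ A, are pairwise disjoint; the closed unit discs centered at the points g(x), x ∈ V ⊔ A, are pairwise disjoint; and for all distinct x, y ∈ V ⊔ A, the closed unit disc centered at g(x) intersects the closed unit disc centered at s(y) if and only if (x, y) is an arc of D'. In other words, D' is realizable as the dependency digraph of a tabletop rearrangement instance with unit discs. -/

import Mathlib

/-- The arc relation of the subdivision `D'` of a digraph `D = (V, A)`.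
Vertices of `D'` are `V ⊕ A`; each arc `a = (u,v)` of `D` gives arcs `(u,a)` and `(a,v)`,
and there are no other arcs. -/
def Subdiv {V : Type*} (A : V → V → Prop) :
    V ⊕ {a : V × V // A a.1 a.2} → V ⊕ {a : V × V // A a.1 a.2} → Prop
  | Sum.inl u, Sum.inr a => a.1.1 = u
  | Sum.inr a, Sum.inl v => a.1.2 = v
  | _, _ => False

open Metric in
lemma aux_inter_iff (x y : ℂ) :
    (closedBall x 1 ∩ closedBall y 1).Nonempty ↔ dist x y ≤ 2 := by
  constructor
  · rintro ⟨z, hz1, hz2⟩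
    have h1 : dist z x ≤ 1 := mem_closedBall.mp hz1
    have h2 : dist z y ≤ 1 := mem_closedBall.mp hz2
    calc dist x y ≤ dist x z + dist z y := dist_triangle x z y
      _ ≤ 2 := by rw [dist_comm x z]; linarith
  · intro h
    have hx : (x + y) / 2 ∈ closedBall x 1 := by
      rw [mem_closedBall, dist_eq_norm, show (x + y) / 2 - x = (y - x) / 2 by ring, norm_div]
      have : ‖y - x‖ ≤ 2 := by rw [← dist_eq_norm, dist_comm]; exact h
      have h2 : ‖(2:ℂ)‖ = 2 := by norm_num
      rw [h2]; linarith
    have hy : (x + y) / 2 ∈ closedBall y 1 := by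
      rw [mem_closedBall, dist_eq_norm, show (x + y) / 2 - y = (x - y) / 2 by ring, norm_div]
      have : ‖x - y‖ ≤ 2 := by rw [← dist_eq_norm]; exact h
      have h2 : ‖(2:ℂ)‖ = 2 := by norm_num
      rw [h2]; linarith
    exact ⟨(x + y) / 2, hx, hy⟩

open Metric in
lemma aux_disjoint (x y : ℂ) (h : 2 < dist x y) :
    Disjoint (closedBall x 1) (closedBall y 1) := by
  rw [Set.disjoint_left]
  intro z hz1 hz2
  have := (aux_inter_iff x y).mp ⟨z, hz1, hz2⟩
  linarith

lemma aux_lower_re (x y : ℂ) (h : 2 < |x.re - y.re|) : 2 < dist x y := by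
  have h1 : |(x - y).re| ≤ ‖x - y‖ := Complex.abs_re_le_norm _
  rw [Complex.dist_eq]
  simp only [Complex.sub_re] at h1
  linarith

lemma aux_lower_im (x y : ℂ) (h : 2 < |x.im - y.im|) : 2 < dist x y := by
  have h1 : |(x - y).im| ≤ ‖x - y‖ := Complex.abs_im_le_norm _
  rw [Complex.dist_eq]
  simp only [Complex.sub_im] at h1
  linarith

lemma aux_le_of (x y : ℂ) (hre : x.re = y.re) (him : |x.im - y.im| ≤ 2) : dist x y ≤ 2 := by
  rw [Complex.dist_eq_re_im, hre]
  simpa [Real.sqrt_sq_eq_abs] using him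

lemma aux_absge (a b : ℝ) (h : 1 ≤ |a - b|) (c x : ℝ) (hc : |c| ≤ 10)
    (hx : x = 100 * a - 100 * b + c) : 2 < |x| := by
  subst hx
  rcases abs_le.mp hc with ⟨h3, h4⟩
  rcases abs_cases (a - b) with ⟨h1, _⟩ | ⟨h1, _⟩ <;>
    rcases abs_cases (100 * a - 100 * b + c) with ⟨h2, _⟩ | ⟨h2, _⟩ <;> linarith

lemma aux_inj2 {α : Type*} (S : Set α) (hS : S.Finite) (h : S.ncard ≤ 2) :
    ∃ f : α → Bool, Set.InjOn f S := by
  by_cases h1 : S.ncard ≤ 1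
  · exact ⟨fun _ => true, fun a ha b hb _ => (Set.ncard_le_one hS).mp h1 a ha b hb⟩
  · have h2 : S.ncard = 2 := le_antisymm h (by omega)
    obtain ⟨a, b, hab, rfl⟩ := Set.ncard_eq_two.mp h2
    classical
    refine ⟨fun x => if x = a then true else false, ?_⟩
    intro x hx y hy hxy
    simp only [Set.mem_insert_iff, Set.mem_singleton_iff] at hx hy
    rcases hx with rfl | rfl <;> rcases hy with rfl | rfl <;> simp_all

open Metric in
/-- Let `D = (V, A)` be a digraph without self-loops in which every vertex has in-degree
at most 2 and out-degree at most 2, and let `D'` be its subdivision, with vertex set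
`V ⊔ A`.  Then there are start and goal positions in the plane (modeled by `ℂ`) for the
objects `V ⊔ A`, with the start discs pairwise disjoint and the goal discs pairwise
disjoint, such that the closed unit disc at `g x` intersects the closed unit disc at
`s y` (for `x ≠ y`) exactly when `(x, y)` is an arc of `D'`; that is, `D'` is realizable
as the dependency digraph of a tabletop rearrangement instance with unit discs. -/
theorem stmt_18 {V : Type*} [Finite V] (A : V → V → Prop)
    (hirr : ∀ v, ¬ A v v)
    (hin : ∀ v : V, {u : V | A u v}.ncard ≤ 2)
    (hout : ∀ v : V, {w : V | A v w}.ncard ≤ 2) :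
    ∃ s g : (V ⊕ {a : V × V // A a.1 a.2}) → ℂ,
      (∀ x y, x ≠ y → Disjoint (closedBall (s x) 1) (closedBall (s y) 1)) ∧
      (∀ x y, x ≠ y → Disjoint (closedBall (g x) 1) (closedBall (g y) 1)) ∧
      (∀ x y, x ≠ y →
        ((closedBall (g x) 1 ∩ closedBall (s y) 1).Nonempty ↔ Subdiv A x y)) := by
  classical
  obtain ⟨n, hn⟩ := exists_injective_nat V
  have hn1 : ∀ u v : V, u ≠ v → (1:ℝ) ≤ |(n u : ℝ) - (n v : ℝ)| := by
    intro u v huv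
    have hne : n u ≠ n v := fun h => huv (hn h)
    rcases lt_or_gt_of_ne hne with h | h
    · have h' : (n u : ℝ) + 1 ≤ (n v : ℝ) := by exact_mod_cast h
      rcases abs_cases ((n u : ℝ) - (n v : ℝ)) with ⟨h1, _⟩ | ⟨h1, _⟩ <;> linarith
    · have h' : (n v : ℝ) + 1 ≤ (n u : ℝ) := by exact_mod_cast h
      rcases abs_cases ((n u : ℝ) - (n v : ℝ)) with ⟨h1, _⟩ | ⟨h1, _⟩ <;> linarith
  choose σf hσf using fun v : V => aux_inj2 {w | A v w} (Set.toFinite _) (hout v)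
  choose τf hτf using fun v : V => aux_inj2 {u | A u v} (Set.toFinite _) (hin v)
  set Arc := {a : V × V // A a.1 a.2} with hArc
  set σ : Arc → ℝ := fun a => if σf a.1.1 a.1.2 then 2 else -2 with hσ
  set τ : Arc → ℝ := fun a => if τf a.1.2 a.1.1 then 2 else -2 with hτ
  have hσ2 : ∀ a : Arc, |σ a| = 2 := by
    intro a; by_cases h : σf a.1.1 a.1.2 <;> simp [hσ, h]
  have hτ2 : ∀ a : Arc, |τ a| = 2 := by
    intro a; by_cases h : τf a.1.2 a.1.1 <;> simp [hτ, h]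
  have hσ4 : ∀ a b : Arc, a ≠ b → a.1.1 = b.1.1 → 2 < |σ a - σ b| := by
    intro a b hab h11
    have h12 : a.1.2 ≠ b.1.2 := by
      intro h; exact hab (Subtype.ext (Prod.ext h11 h))
    have hm1 : a.1.2 ∈ {w | A a.1.1 w} := a.2
    have hm2 : b.1.2 ∈ {w | A a.1.1 w} := by
      show A a.1.1 b.1.2; rw [h11]; exact b.2
    have hne : σf a.1.1 a.1.2 ≠ σf a.1.1 b.1.2 :=
      fun h => h12 (hσf a.1.1 hm1 hm2 h)
    have hb : σ b = if σf a.1.1 b.1.2 then (2:ℝ) else -2 := by rw [hσ, h11]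
    rw [hσ] at *
    simp only at hb ⊢
    rw [hb]
    rcases Bool.eq_false_or_eq_true (σf a.1.1 a.1.2) with h1 | h1 <;>
      rcases Bool.eq_false_or_eq_true (σf a.1.1 b.1.2) with h2 | h2 <;>
        simp [h1, h2] at hne ⊢ <;> norm_num
  have hτ4 : ∀ a b : Arc, a ≠ b → a.1.2 = b.1.2 → 2 < |τ a - τ b| := by
    intro a b hab h22
    have h12 : a.1.1 ≠ b.1.1 := by
      intro h; exact hab (Subtype.ext (Prod.ext h h22))
    have hm1 : a.1.1 ∈ {u | A u a.1.2} := a.2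
    have hm2 : b.1.1 ∈ {u | A u a.1.2} := by
      show A b.1.1 a.1.2; rw [h22]; exact b.2
    have hne : τf a.1.2 a.1.1 ≠ τf a.1.2 b.1.1 :=
      fun h => h12 (hτf a.1.2 hm1 hm2 h)
    have hb : τ b = if τf a.1.2 b.1.1 then (2:ℝ) else -2 := by rw [hτ, h22]
    rw [hτ] at *
    simp only at hb ⊢
    rw [hb]
    rcases Bool.eq_false_or_eq_true (τf a.1.2 a.1.1) with h1 | h1 <;>
      rcases Bool.eq_false_or_eq_true (τf a.1.2 b.1.1) with h2 | h2 <;>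
        simp [h1, h2] at hne ⊢ <;> norm_num
  refine ⟨Sum.elim (fun v => ((100 * (n v : ℝ) : ℝ) : ℂ))
      (fun a => ((100 * (n a.1.1 : ℝ) + 10 : ℝ) : ℂ) + (σ a : ℝ) * Complex.I),
    Sum.elim (fun v => ((100 * (n v : ℝ) + 10 : ℝ) : ℂ))
      (fun a => ((100 * (n a.1.2 : ℝ) : ℝ) : ℂ) + (τ a : ℝ) * Complex.I), ?_, ?_, ?_⟩
  · -- start discs disjoint
    intro x y hxy
    apply aux_disjoint
    rcases x with u | a <;> rcases y with v | b
    · have huv : u ≠ v := fun h => hxy (by rw [h])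
      apply aux_lower_re
      refine aux_absge (n u : ℝ) (n v : ℝ) (hn1 u v huv) 0 _ (by norm_num) ?_
      simp only [Sum.elim_inl, Complex.ofReal_re]
      ring
    · by_cases h : u = b.1.1
      · apply aux_lower_re
        simp only [Sum.elim_inl, Sum.elim_inr, Complex.add_re, Complex.ofReal_re,
          Complex.mul_re, Complex.I_re, Complex.ofReal_im, Complex.I_im, mul_zero, zero_mul,
          mul_one, sub_zero, zero_sub, add_zero]
        rw [h]
        norm_num
      · apply aux_lower_re
        refine aux_absge (n u : ℝ) (n b.1.1 : ℝ) (hn1 _ _ h) (-10) _ (by norm_num) ?_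
        simp only [Sum.elim_inl, Sum.elim_inr, Complex.add_re, Complex.ofReal_re,
          Complex.mul_re, Complex.I_re, Complex.ofReal_im, Complex.I_im, mul_zero, zero_mul,
          mul_one, sub_zero, zero_sub, add_zero]
        ring
    · by_cases h : a.1.1 = v
      · apply aux_lower_re
        simp only [Sum.elim_inl, Sum.elim_inr, Complex.add_re, Complex.ofReal_re,
          Complex.mul_re, Complex.I_re, Complex.ofReal_im, Complex.I_im, mul_zero, zero_mul,
          mul_one, sub_zero, zero_sub, add_zero]
        rw [h]
        norm_num
      · apply aux_lower_re
        refine aux_absge (n a.1.1 : ℝ) (n v : ℝ) (hn1 _ _ fun hh => h hh) 10 _ (by norm_num) ?_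
        simp only [Sum.elim_inl, Sum.elim_inr, Complex.add_re, Complex.ofReal_re,
          Complex.mul_re, Complex.I_re, Complex.ofReal_im, Complex.I_im, mul_zero, zero_mul,
          mul_one, sub_zero, zero_sub, add_zero]
        ring
    · have hab : a ≠ b := fun h => hxy (by rw [h])
      by_cases h : a.1.1 = b.1.1
      · apply aux_lower_im
        simp only [Sum.elim_inr, Complex.add_im, Complex.ofReal_im, Complex.mul_im,
          Complex.I_im, Complex.I_re, Complex.ofReal_re, mul_one, mul_zero, add_zero, zero_add]
        exact hσ4 a b hab h
      · apply aux_lower_re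
        refine aux_absge (n a.1.1 : ℝ) (n b.1.1 : ℝ) (hn1 _ _ h) 0 _
          (by norm_num) ?_
        simp only [Sum.elim_inr, Complex.add_re, Complex.ofReal_re,
          Complex.mul_re, Complex.I_re, Complex.ofReal_im, Complex.I_im, mul_zero, zero_mul,
          mul_one, sub_zero, zero_sub, add_zero]
        ring
  · -- goal discs disjoint
    intro x y hxy
    apply aux_disjoint
    rcases x with u | a <;> rcases y with v | b
    · have huv : u ≠ v := fun h => hxy (by rw [h])
      apply aux_lower_re
      refine aux_absge (n u : ℝ) (n v : ℝ) (hn1 u v huv) 0 _ (by norm_num) ?_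
      simp only [Sum.elim_inl, Complex.ofReal_re]
      ring
    · by_cases h : u = b.1.2
      · apply aux_lower_re
        simp only [Sum.elim_inl, Sum.elim_inr, Complex.add_re, Complex.ofReal_re,
          Complex.mul_re, Complex.I_re, Complex.ofReal_im, Complex.I_im, mul_zero, zero_mul,
          mul_one, sub_zero, zero_sub, add_zero]
        rw [h]
        norm_num
      · apply aux_lower_re
        refine aux_absge (n u : ℝ) (n b.1.2 : ℝ) (hn1 _ _ h) 10 _ (by norm_num) ?_
        simp only [Sum.elim_inl, Sum.elim_inr, Complex.add_re, Complex.ofReal_re,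
          Complex.mul_re, Complex.I_re, Complex.ofReal_im, Complex.I_im, mul_zero, zero_mul,
          mul_one, sub_zero, zero_sub, add_zero]
        ring
    · by_cases h : a.1.2 = v
      · apply aux_lower_re
        simp only [Sum.elim_inl, Sum.elim_inr, Complex.add_re, Complex.ofReal_re,
          Complex.mul_re, Complex.I_re, Complex.ofReal_im, Complex.I_im, mul_zero, zero_mul,
          mul_one, sub_zero, zero_sub, add_zero]
        rw [h]
        norm_num
      · apply aux_lower_re
        refine aux_absge (n a.1.2 : ℝ) (n v : ℝ) (hn1 _ _ h) (-10) _ (by norm_num) ?_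
        simp only [Sum.elim_inl, Sum.elim_inr, Complex.add_re, Complex.ofReal_re,
          Complex.mul_re, Complex.I_re, Complex.ofReal_im, Complex.I_im, mul_zero, zero_mul,
          mul_one, sub_zero, zero_sub, add_zero]
        ring
    · have hab : a ≠ b := fun h => hxy (by rw [h])
      by_cases h : a.1.2 = b.1.2
      · apply aux_lower_im
        simp only [Sum.elim_inr, Complex.add_im, Complex.ofReal_im, Complex.mul_im,
          Complex.I_im, Complex.I_re, Complex.ofReal_re, mul_one, mul_zero, add_zero, zero_add]
        exact hτ4 a b hab h
      · apply aux_lower_re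
        refine aux_absge (n a.1.2 : ℝ) (n b.1.2 : ℝ) (hn1 _ _ h) 0 _ (by norm_num) ?_
        simp only [Sum.elim_inr, Complex.add_re, Complex.ofReal_re,
          Complex.mul_re, Complex.I_re, Complex.ofReal_im, Complex.I_im, mul_zero, zero_mul,
          mul_one, sub_zero, zero_sub, add_zero]
  · -- dependency iff
    intro x y hxy
    rw [aux_inter_iff]
    rcases x with u | a <;> rcases y with v | b
    · have huv : u ≠ v := fun h => hxy (by rw [h])
      refine iff_of_false (not_le.mpr ?_) (fun h => h)
      apply aux_lower_re
      refine aux_absge (n u : ℝ) (n v : ℝ) (hn1 u v huv) 10 _ (by norm_num) ?_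
      simp only [Sum.elim_inl, Complex.ofReal_re]
      ring
    · by_cases h : b.1.1 = u
      · refine iff_of_true ?_ h
        apply aux_le_of
        · simp only [Sum.elim_inl, Sum.elim_inr, Complex.add_re, Complex.ofReal_re,
            Complex.mul_re, Complex.I_re, Complex.ofReal_im, Complex.I_im, mul_zero, zero_mul,
            mul_one, sub_zero, add_zero]
          rw [h]
        · simp only [Sum.elim_inl, Sum.elim_inr, Complex.add_im, Complex.ofReal_im,
            Complex.mul_im, Complex.I_im, Complex.I_re, Complex.ofReal_re, mul_one, mul_zero,
            add_zero, zero_add, zero_sub, abs_neg]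
          rw [hσ2 b]
      · refine iff_of_false (not_le.mpr ?_) h
        apply aux_lower_re
        refine aux_absge (n u : ℝ) (n b.1.1 : ℝ) (hn1 _ _ fun hh => h hh.symm) 0 _
          (by norm_num) ?_
        simp only [Sum.elim_inl, Sum.elim_inr, Complex.add_re, Complex.ofReal_re,
          Complex.mul_re, Complex.I_re, Complex.ofReal_im, Complex.I_im, mul_zero, zero_mul,
          mul_one, sub_zero, zero_sub, add_zero]
        ring
    · by_cases h : a.1.2 = v
      · refine iff_of_true ?_ h
        apply aux_le_of
        · simp only [Sum.elim_inl, Sum.elim_inr, Complex.add_re, Complex.ofReal_re,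
            Complex.mul_re, Complex.I_re, Complex.ofReal_im, Complex.I_im, mul_zero, zero_mul,
            mul_one, sub_zero, add_zero]
          rw [h]
        · simp only [Sum.elim_inl, Sum.elim_inr, Complex.add_im, Complex.ofReal_im,
            Complex.mul_im, Complex.I_im, Complex.I_re, Complex.ofReal_re, mul_one, mul_zero,
            add_zero, zero_add, sub_zero]
          rw [hτ2 a]
      · refine iff_of_false (not_le.mpr ?_) h
        apply aux_lower_re
        refine aux_absge (n a.1.2 : ℝ) (n v : ℝ) (hn1 _ _ h) 0 _ (by norm_num) ?_
        simp only [Sum.elim_inl, Sum.elim_inr, Complex.add_re, Complex.ofReal_re,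
          Complex.mul_re, Complex.I_re, Complex.ofReal_im, Complex.I_im, mul_zero, zero_mul,
          mul_one, sub_zero, zero_sub, add_zero]
    · refine iff_of_false (not_le.mpr ?_) (fun h => h)
      apply aux_lower_re
      by_cases h : a.1.2 = b.1.1
      · simp only [Sum.elim_inr, Complex.add_re, Complex.ofReal_re,
          Complex.mul_re, Complex.I_re, Complex.ofReal_im, Complex.I_im, mul_zero, zero_mul,
          mul_one, sub_zero, zero_sub, add_zero]
        rw [h]
        norm_num
      · refine aux_absge (n a.1.2 : ℝ) (n b.1.1 : ℝ) (hn1 _ _ h) (-10) _ (by norm_num) ?_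
        simp only [Sum.elim_inr, Complex.add_re, Complex.ofReal_re,
          Complex.mul_re, Complex.I_re, Complex.ofReal_im, Complex.I_im, mul_zero, zero_mul,
          mul_one, sub_zero, zero_sub, add_zero]
        ring
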